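/- Let x ∈ F_q^{n×m}, let X = [I_n | x] ∈ F_q^{n×(n+m)}, and let Y = [Â | y] ∈ F_q^{n×(n+m)} where Â ∈ F_q^{n×n} is invertible and y ∈ F_q^{n×m}. Then d_S(⟨X⟩, ⟨Y⟩) = 2·rank(Â^{-1}y − x) = 2·d_R(x, Â^{-1}y). -/

import Mathlib

/-- The row space of a matrix: the span of its rows. -/
noncomputable def rowSpace {F : Type*} [Field F] {ι κ : Type*}
    (M : Matrix ι κ F) : Submodule F (κ → F) :=
  Submodule.span F (Set.range fun i => M i)

/-- The subspace distance `d_S(U,V) = dim(U + V) - dim(U ∩ V)`. -/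
noncomputable def sDist {F : Type*} [Field F] {κ : Type*}
    (U V : Submodule F (κ → F)) : ℕ :=
  Module.finrank F ↥(U ⊔ V) - Module.finrank F ↥(U ⊓ V)

open Matrix in
lemma rowSpace_eq_range {F : Type*} [Field F] {ι κ : Type*} [Fintype ι]
    (M : Matrix ι κ F) : rowSpace M = LinearMap.range M.vecMulLinear :=
  (range_vecMulLinear M).symm

open Matrix in
lemma rowSpace_mul_le {F ι ι' κ : Type*} [Field F] [Fintype ι] [Fintype ι']
    (A : Matrix ι' ι F) (M : Matrix ι κ F) :
    rowSpace (A * M) ≤ rowSpace M := by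
  rw [rowSpace_eq_range, rowSpace_eq_range]
  rintro w ⟨v, rfl⟩
  exact ⟨v ᵥ* A, by simp [Matrix.vecMulLinear_apply, Matrix.vecMul_vecMul]⟩

lemma rowSpace_unit_mul {F ι κ : Type*} [Field F] [Fintype ι] [DecidableEq ι]
    (A : Matrix ι ι F) (hA : IsUnit A) (M : Matrix ι κ F) :
    rowSpace (A * M) = rowSpace M := by
  refine le_antisymm (rowSpace_mul_le A M) ?_
  have h := rowSpace_mul_le A⁻¹ (A * M)
  rwa [← Matrix.mul_assoc, Matrix.nonsing_inv_mul _
    ((Matrix.isUnit_iff_isUnit_det _).mp hA), Matrix.one_mul] at h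

open Matrix in
lemma finrank_range_vecMulLinear {F : Type*} [Field F] {n m : ℕ}
    (M : Matrix (Fin n) (Fin m) F) :
    Module.finrank F ↥(LinearMap.range M.vecMulLinear) = M.rank := by
  rw [← Matrix.rank_transpose, Matrix.rank, ← Matrix.vecMulLinear_transpose,
    Matrix.transpose_transpose]

open Matrix in
lemma sDist_identity_blocks {F : Type*} [Field F] {n m : ℕ}
    (x z : Matrix (Fin n) (Fin m) F) :
    sDist (rowSpace (Matrix.fromCols (1 : Matrix (Fin n) (Fin n) F) x))
        (rowSpace (Matrix.fromCols (1 : Matrix (Fin n) (Fin n) F) z))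
      = 2 * (z - x).rank := by
  classical
  set U := rowSpace (Matrix.fromCols (1 : Matrix (Fin n) (Fin n) F) x) with hU
  set V := rowSpace (Matrix.fromCols (1 : Matrix (Fin n) (Fin n) F) z) with hV
  set Lx := (Matrix.fromCols (1 : Matrix (Fin n) (Fin n) F) x).vecMulLinear with hLx
  set Lz := (Matrix.fromCols (1 : Matrix (Fin n) (Fin n) F) z).vecMulLinear with hLz
  have hLxa : ∀ a, Lx a = Sum.elim a (a ᵥ* x) := by
    intro a
    simp [hLx, Matrix.vecMulLinear_apply, Matrix.vecMul_fromCols, Matrix.vecMul_one]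
  have hLza : ∀ a, Lz a = Sum.elim a (a ᵥ* z) := by
    intro a
    simp [hLz, Matrix.vecMulLinear_apply, Matrix.vecMul_fromCols, Matrix.vecMul_one]
  have hLxinj : Function.Injective Lx := by
    intro a b hab
    rw [hLxa, hLxa] at hab
    funext i
    exact congrFun hab (Sum.inl i)
  have hUr : U = LinearMap.range Lx := rowSpace_eq_range _
  have hVr : V = LinearMap.range Lz := rowSpace_eq_range _
  have hdimU : Module.finrank F ↥U = n := by
    rw [hUr, LinearMap.finrank_range_of_inj hLxinj, Module.finrank_fin_fun]
  have hdimV : Module.finrank F ↥V = n := by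
    have hLzinj : Function.Injective Lz := by
      intro a b hab
      rw [hLza, hLza] at hab
      funext i
      exact congrFun hab (Sum.inl i)
    rw [hVr, LinearMap.finrank_range_of_inj hLzinj, Module.finrank_fin_fun]
  set D := (z - x).vecMulLinear with hD
  have hDa : ∀ a, D a = a ᵥ* z - a ᵥ* x := by
    intro a
    simp [hD, Matrix.vecMulLinear_apply, Matrix.vecMul_sub]
  have hinf : U ⊓ V = Submodule.map Lx (LinearMap.ker D) := by
    ext w
    constructor
    · rintro ⟨hwU, hwV⟩
      rw [hUr] at hwU
      rw [hVr] at hwV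
      obtain ⟨a, rfl⟩ := hwU
      obtain ⟨b, hb⟩ := hwV
      have hab : b = a := by
        funext i
        have := congrFun hb (Sum.inl i)
        rw [hLza, hLxa] at this
        exact this
      subst hab
      refine ⟨b, ?_, rfl⟩
      simp only [SetLike.mem_coe, LinearMap.mem_ker]
      rw [hDa, sub_eq_zero]
      funext j
      have := congrFun hb (Sum.inr j)
      rw [hLza, hLxa] at this
      exact this
    · rintro ⟨a, ha, rfl⟩
      simp only [SetLike.mem_coe, LinearMap.mem_ker] at ha
      rw [hDa, sub_eq_zero] at ha
      constructor
      · rw [hUr]; exact ⟨a, rfl⟩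
      · rw [hVr]
        refine ⟨a, ?_⟩
        rw [hLza, hLxa, ha]
  have hdiminf : Module.finrank F ↥(U ⊓ V) = n - (z - x).rank := by
    rw [hinf, ← (Submodule.equivMapOfInjective Lx hLxinj (LinearMap.ker D)).finrank_eq]
    have hrn := LinearMap.finrank_range_add_finrank_ker D
    rw [finrank_range_vecMulLinear, Module.finrank_fin_fun] at hrn
    omega
  have hrle : (z - x).rank ≤ n := (z - x).rank_le_height
  have hsup : Module.finrank F ↥(U ⊔ V) + Module.finrank F ↥(U ⊓ V)
      = Module.finrank F ↥U + Module.finrank F ↥V :=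
    Submodule.finrank_sup_add_finrank_inf_eq U V
  rw [sDist]
  omega

/-- for `X = [I | x]` and `Y = [Ahat | y]` with `Ahat` invertible,
`d_S(⟨X⟩, ⟨Y⟩) = 2·rank(Ahat⁻¹y − x)`. -/
theorem sDist_lifting_invertible
    {F : Type*} [Field F] [Fintype F] [DecidableEq F] {n m : ℕ}
    (x y : Matrix (Fin n) (Fin m) F)
    (Ahat : Matrix (Fin n) (Fin n) F) (hAhat : IsUnit Ahat) :
    sDist (rowSpace (Matrix.fromCols (1 : Matrix (Fin n) (Fin n) F) x))
        (rowSpace (Matrix.fromCols Ahat y))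
      = 2 * (Ahat⁻¹ * y - x).rank := by
  have hfact : Matrix.fromCols Ahat y
      = Ahat * Matrix.fromCols (1 : Matrix (Fin n) (Fin n) F) (Ahat⁻¹ * y) := by
    rw [Matrix.mul_fromCols, Matrix.mul_one, ← Matrix.mul_assoc,
      Matrix.mul_nonsing_inv _ ((Matrix.isUnit_iff_isUnit_det _).mp hAhat), Matrix.one_mul]
  rw [hfact, rowSpace_unit_mul _ hAhat, sDist_identity_blocks]
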